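/- Let n and k be positive integers with k not divisible by 6. If S = IAP(A,D) is a k-interlaced arithmetic progression of integers whose orbit (under a_{i+1,j} = a_{i,j} + a_{i,j+1}) is (k,k)-interlaced doubly arithmetic, then S is the zero sequence. -/

import Mathlib

def IAP {G : Type*} [AddCommGroup G] (k : ℕ) (A D : ℕ → G) : ℤ → G :=
  fun j => A (j % (k : ℤ)).toNat + (j / (k : ℤ)) • D (j % (k : ℤ)).toNat

def orbit {G : Type*} [AddCommGroup G] (S : ℤ → G) : ℕ → ℤ → G
  | 0 => S
  | i+1 => fun j => orbit S i j + orbit S i (j+1)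

lemma six_dvd (k : ℕ) (hk : 0 < k) (z : ℂ) (h1 : z ^ k = 1) (h2 : (1 + z) ^ k = 1) :
    6 ∣ k := by
  have habs : ‖z‖ = 1 := by
    have h : ‖z‖ ^ k = 1 := by rw [← norm_pow, h1, norm_one]
    have h0 : 0 ≤ ‖z‖ := norm_nonneg _
    rcases lt_trichotomy (‖z‖) 1 with hlt | heq | hgt
    · exact absurd h (by nlinarith [pow_lt_one₀ h0 hlt hk.ne'])
    · exact heq
    · exact absurd h (by nlinarith [one_lt_pow₀ hgt hk.ne'])
  have habs2 : ‖1 + z‖ = 1 := by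
    have h : ‖1 + z‖ ^ k = 1 := by rw [← norm_pow, h2, norm_one]
    have h0 : 0 ≤ ‖1 + z‖ := norm_nonneg _
    rcases lt_trichotomy (‖1 + z‖) 1 with hlt | heq | hgt
    · exact absurd h (by nlinarith [pow_lt_one₀ h0 hlt hk.ne'])
    · exact heq
    · exact absurd h (by nlinarith [one_lt_pow₀ hgt hk.ne'])
  have hn1 : Complex.normSq z = 1 := by
    rw [← Complex.sq_norm, habs]; norm_num
  have hn2 : Complex.normSq (1 + z) = 1 := by
    rw [← Complex.sq_norm, habs2]; norm_num
  rw [Complex.normSq_apply] at hn1 hn2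
  simp only [Complex.add_re, Complex.add_im, Complex.one_re, Complex.one_im] at hn2
  have hre : z.re = -1/2 := by nlinarith
  have him : z.im * z.im = 3/4 := by nlinarith
  have hz2 : z ^ 2 + z + 1 = 0 := by
    apply Complex.ext <;>
      simp [pow_two, Complex.mul_re, Complex.mul_im, Complex.add_re, Complex.add_im, hre] <;>
      nlinarith
  have h3 : z ^ 3 = 1 := by linear_combination (z - 1) * hz2
  have hne : z ≠ 1 := by
    intro h; rw [h] at hre; norm_num at hre
  have h3k : 3 ∣ k := by
    have hd3 : orderOf z ∣ 3 := orderOf_dvd_of_pow_eq_one h3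
    have hdk : orderOf z ∣ k := orderOf_dvd_of_pow_eq_one h1
    rcases (Nat.prime_three).eq_one_or_self_of_dvd _ hd3 with h | h
    · exact absurd (orderOf_eq_one_iff.mp h) hne
    · rwa [h] at hdk
  have h2k : 2 ∣ k := by
    have h1z : 1 + z = -(z ^ 2) := by linear_combination hz2
    rw [h1z] at h2
    have : (-1 : ℂ) ^ k = 1 := by
      rw [neg_pow] at h2
      rwa [← pow_mul, mul_comm 2 k, pow_mul, h1, one_pow, mul_one] at h2
    have heven : Even k := by
      rcases Nat.even_or_odd k with he | ho
      · exact he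
      · rw [ho.neg_one_pow] at this; norm_num at this
    exact heven.two_dvd
  have : (2 * 3 : ℕ) ∣ k := Nat.Coprime.mul_dvd_of_dvd_of_dvd (by norm_num) h2k h3k
  simpa using this

lemma orbit_sub (f g : ℤ → ℤ) (i : ℕ) :
    ∀ x, orbit (fun y => f y - g y) i x = orbit f i x - orbit g i x := by
  induction i with
  | zero => intro x; rfl
  | succ i ih => intro x; simp only [orbit, ih]; ring

lemma orbit_shift (f : ℤ → ℤ) (c : ℤ) (i : ℕ) :
    ∀ x, orbit (fun y => f (y + c)) i x = orbit f i (x + c) := by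
  induction i with
  | zero => intro x; rfl
  | succ i ih =>
    intro x
    simp only [orbit, ih]
    rw [show x + 1 + c = x + c + 1 by ring]

lemma orbit_orbit (S : ℤ → ℤ) (a b : ℕ) :
    ∀ x, orbit (orbit S a) b x = orbit S (a + b) x := by
  induction b with
  | zero => intro x; rfl
  | succ b ih => intro x; simp only [orbit, ih]; rfl


open Polynomial in
lemma key (k : ℕ) (hk : 0 < k) (h6 : ¬ (6 ∣ k)) (v : ℤ → ℤ)
    (hper : ∀ x, v (x + k) = v x)
    (horb : ∀ x, orbit v k x = v x) : ∀ x, v x = 0 := by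
  haveI : NeZero k := ⟨hk.ne'⟩
  have hper' : ∀ (x : ℤ) (n : ℤ), v (x + n * k) = v x := by
    intro x n
    induction n using Int.induction_on with
    | zero => simp
    | succ i ih =>
      have h := hper (x + (i : ℤ) * k)
      rw [show x + ((i : ℤ) + 1) * k = x + (i : ℤ) * k + k by ring]
      rw [h, ih]
    | pred i ih =>
      have h := hper (x + (-(i : ℤ) - 1) * k)
      rw [show x + (-(i : ℤ) - 1) * k + k = x + (-(i : ℤ)) * k by ring] at h
      rw [← ih, ← h]
  set b : ZMod k → ℂ := fun r => (v (r.val) : ℂ) with hb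
  have hval : ∀ x : ℤ, v x = v ((x : ZMod k).val) := by
    intro x
    have hm : (((x : ZMod k).val : ℤ) : ZMod k) = (x : ZMod k) := by
      rw [Int.cast_natCast, ZMod.natCast_val, ZMod.cast_id]
    have hdvd : (k : ℤ) ∣ x - ((x : ZMod k).val : ℤ) := by
      rw [← ZMod.intCast_zmod_eq_zero_iff_dvd]
      push_cast
      rw [ZMod.natCast_val, ZMod.cast_id, sub_self]
    obtain ⟨c, hc⟩ := hdvd
    have h := hper' (((x : ZMod k).val : ℤ)) c
    rw [show (((x : ZMod k).val : ℤ)) + c * k = x by linear_combination -hc] at h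
    exact h
  have hcompat : ∀ x : ℤ, (v x : ℂ) = b ((x : ZMod k)) := by
    intro x; rw [hb]; simp only []; rw [← hval x]
  let T : Module.End ℂ (ZMod k → ℂ) :=
    { toFun := fun c r => c (r + 1)
      map_add' := fun c d => rfl
      map_smul' := fun m c => rfl }
  have hT : ∀ (c : ZMod k → ℂ) r, T c r = c (r + 1) := fun _ _ => rfl
  have hTn : ∀ (n : ℕ) (c : ZMod k → ℂ) (r : ZMod k), (T ^ n) c r = c (r + n) := by
    intro n
    induction n with
    | zero => intro c r; simp
    | succ n ih =>
      intro c r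
      rw [pow_succ, Module.End.mul_apply, ih, hT]
      push_cast
      ring_nf
  have hrel : ∀ (n : ℕ) (x : ℤ),
      ((orbit v n x : ℤ) : ℂ) = (((1 + T) ^ n) b) ((x : ZMod k)) := by
    intro n
    induction n with
    | zero => intro x; simpa [orbit] using hcompat x
    | succ n ih =>
      intro x
      rw [pow_succ', Module.End.mul_apply, LinearMap.add_apply, Module.End.one_apply,
        Pi.add_apply, hT]
      show ((orbit v n x + orbit v n (x + 1) : ℤ) : ℂ) = _
      push_cast [ih x, ih (x + 1)]
      ring
  have hfix : ((1 + T) ^ k) b = b := by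
    funext r
    have h := hrel k ((r.val : ℤ))
    rw [horb] at h
    have hr : (((r.val : ℤ) : ZMod k)) = r := by
      rw [Int.cast_natCast, ZMod.natCast_val, ZMod.cast_id]
    rw [hr] at h
    exact h.symm
  have hTk : T ^ k = 1 := by
    apply LinearMap.ext; intro c; funext r
    rw [hTn, Module.End.one_apply, ZMod.natCast_self, add_zero]
  set P : Polynomial ℂ := (1 + Polynomial.X) ^ k - 1 with hP
  set q : Polynomial ℂ := Polynomial.X ^ k - 1 with hq
  have hqne : q ≠ 0 := by
    have := Polynomial.X_pow_sub_C_ne_zero (R := ℂ) hk 1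
    simpa [hq] using this
  have hcop : IsCoprime P q := by
    rw [← EuclideanDomain.gcd_isUnit_iff]
    by_contra hu
    set g := EuclideanDomain.gcd P q with hg
    have hgq : g ∣ q := EuclideanDomain.gcd_dvd_right P q
    have hgP : g ∣ P := EuclideanDomain.gcd_dvd_left P q
    have hgne : g ≠ 0 := by
      intro h0
      rw [h0] at hgq
      exact hqne (zero_dvd_iff.mp hgq)
    have hdeg : 0 < g.degree := by
      rcases lt_or_ge 0 g.degree with h | h
      · exact h
      · exact absurd (Polynomial.isUnit_iff_degree_eq_zero.mpr
          (le_antisymm h (Polynomial.zero_le_degree_iff.mpr hgne))) hu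
    obtain ⟨z, hz⟩ := Complex.exists_root hdeg
    have hzq : q.IsRoot z := hz.dvd hgq
    have hzP : P.IsRoot z := hz.dvd hgP
    have h1 : z ^ k = 1 := by
      have := hzq
      simp only [hq, Polynomial.IsRoot, Polynomial.eval_sub, Polynomial.eval_pow,
        Polynomial.eval_X, Polynomial.eval_one] at this
      linear_combination this
    have h2 : (1 + z) ^ k = 1 := by
      have := hzP
      simp only [hP, Polynomial.IsRoot, Polynomial.eval_sub, Polynomial.eval_pow,
        Polynomial.eval_add, Polynomial.eval_X, Polynomial.eval_one] at this
      linear_combination this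
    exact h6 (six_dvd k hk z h1 h2)
  obtain ⟨u, w, huw⟩ := hcop
  have hqT : Polynomial.aeval T q = 0 := by
    simp [hq, map_sub, map_pow, Polynomial.aeval_X, hTk]
  have hPT : Polynomial.aeval T P = (1 + T) ^ k - 1 := by
    simp [hP, map_sub, map_pow, map_add, Polynomial.aeval_X, map_one]
  have hPTb : (Polynomial.aeval T P) b = 0 := by
    rw [hPT, LinearMap.sub_apply, hfix, Module.End.one_apply, sub_self]
  have hb0 : b = 0 := by
    have h1 : (Polynomial.aeval T) (u * P + w * q) = 1 := by rw [huw]; simp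
    rw [map_add, map_mul, map_mul, hqT, mul_zero, add_zero] at h1
    have h2 := congrArg (fun f : Module.End ℂ (ZMod k → ℂ) => f b) h1
    simp only [Module.End.mul_apply, Module.End.one_apply] at h2
    rw [hPTb, map_zero] at h2
    exact h2.symm
  intro x
  have h := hcompat x
  rw [hb0] at h
  simpa using h

theorem stmt18 (k : ℕ) (hk : 0 < k) (h6 : ¬ (6 ∣ k)) (A D : ℕ → ℤ)
    (hIDA : ∀ i0 < k, ∀ j0 < k, ∀ (i : ℕ) (j : ℤ),
      orbit (IAP k A D) (i0 + i * k) ((j0 : ℤ) + j * k) =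
        orbit (IAP k A D) i0 (j0 : ℤ)
          + (i : ℤ) * (orbit (IAP k A D) (i0 + k) (j0 : ℤ) - orbit (IAP k A D) i0 (j0 : ℤ))
          + j * (orbit (IAP k A D) i0 ((j0 : ℤ) + k) - orbit (IAP k A D) i0 (j0 : ℤ))) :
    ∀ j : ℤ, IAP k A D j = 0 := by
  set S : ℤ → ℤ := IAP k A D with hSdef
  have hk' : (0 : ℤ) < (k : ℤ) := by exact_mod_cast hk
  -- every integer decomposes
  have hdecomp : ∀ x : ℤ, ∃ j0 : ℕ, j0 < k ∧ ∃ j : ℤ, x = (j0 : ℤ) + j * k := by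
    intro x
    refine ⟨(x % k).toNat, ?_, x / k, ?_⟩
    · have h1 : x % (k : ℤ) < k := Int.emod_lt_of_pos x hk'
      have h2 : 0 ≤ x % (k : ℤ) := Int.emod_nonneg x hk'.ne'
      omega
    · have h2 : 0 ≤ x % (k : ℤ) := Int.emod_nonneg x hk'.ne'
      have h3 := Int.emod_add_mul_ediv x (k : ℤ)
      rw [Int.toNat_of_nonneg h2]
      linarith
  -- specializations of hIDA at i0 = 0
  have h0 : ∀ j0 < k, ∀ j : ℤ, S ((j0 : ℤ) + j * k) =
      S (j0 : ℤ) + j * (S ((j0 : ℤ) + k) - S (j0 : ℤ)) := by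
    intro j0 hj0 j
    have h := hIDA 0 hk j0 hj0 0 j
    simp only [Nat.zero_add, Nat.mul_zero, Nat.zero_mul, zero_add] at h
    rw [show orbit S 0 = S from rfl] at h
    push_cast at h
    linarith [h]
  have h1 : ∀ j0 < k, ∀ j : ℤ, orbit S k ((j0 : ℤ) + j * k) =
      orbit S k (j0 : ℤ) + j * (S ((j0 : ℤ) + k) - S (j0 : ℤ)) := by
    intro j0 hj0 j
    have h := hIDA 0 hk j0 hj0 1 j
    simp only [Nat.zero_add, Nat.one_mul, Nat.zero_mul, zero_add, one_mul] at h
    rw [show orbit S 0 = S from rfl] at h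
    push_cast at h
    linarith [h]
  have h2 : ∀ j0 < k, ∀ j : ℤ, orbit S (k + k) ((j0 : ℤ) + j * k) =
      S (j0 : ℤ) + 2 * (orbit S k (j0 : ℤ) - S (j0 : ℤ))
        + j * (S ((j0 : ℤ) + k) - S (j0 : ℤ)) := by
    intro j0 hj0 j
    have h := hIDA 0 hk j0 hj0 2 j
    rw [show 0 + 2 * k = k + k by ring, show 0 + k = k by ring] at h
    rw [show orbit S 0 = S from rfl] at h
    push_cast at h
    linarith [h]
  -- U := orbit S k - S
  set U : ℤ → ℤ := fun x => orbit S k x - S x with hU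
  have hUper : ∀ x, U (x + k) = U x := by
    intro x
    obtain ⟨j0, hj0, j, rfl⟩ := hdecomp x
    have e : (j0 : ℤ) + j * k + k = (j0 : ℤ) + (j + 1) * k := by ring
    simp only [hU, e, h1 j0 hj0, h0 j0 hj0]
    ring
  have hUorb : ∀ x, orbit U k x = U x := by
    intro x
    have e1 : ∀ y, orbit U k y = orbit S (k + k) y - orbit S k y := by
      intro y
      rw [hU]
      rw [orbit_sub (fun z => orbit S k z) S k y]
      rw [orbit_orbit S k k y]
    obtain ⟨j0, hj0, j, rfl⟩ := hdecomp x
    rw [e1, h2 j0 hj0, h1 j0 hj0]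
    simp only [hU, h1 j0 hj0, h0 j0 hj0]
    ring
  have hU0 := key k hk h6 U hUper hUorb
  have horbS : ∀ x, orbit S k x = S x := by
    intro x
    have := hU0 x
    simp only [hU] at this
    linarith
  -- V := S (· + k) - S
  set V : ℤ → ℤ := fun x => S (x + k) - S x with hV
  have hVper : ∀ x, V (x + k) = V x := by
    intro x
    obtain ⟨j0, hj0, j, rfl⟩ := hdecomp x
    have e1 : (j0 : ℤ) + j * k + k = (j0 : ℤ) + (j + 1) * k := by ring
    have e2 : (j0 : ℤ) + (j + 1) * k + k = (j0 : ℤ) + (j + 2) * k := by ring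
    simp only [hV, e1, e2, h0 j0 hj0]
    ring
  have hVorb : ∀ x, orbit V k x = V x := by
    intro x
    have e1 : orbit V k x = orbit S k (x + k) - orbit S k x := by
      rw [hV]
      rw [orbit_sub (fun y => S (y + k)) S k x]
      rw [orbit_shift S k k x]
    rw [e1, horbS, horbS]
  have hV0 := key k hk h6 V hVper hVorb
  have hSper : ∀ x, S (x + k) = S x := by
    intro x
    have := hV0 x
    simp only [hV] at this
    linarith
  have hS0 := key k hk h6 S hSper horbS
  intro j
  exact hS0 j
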